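/- arXiv:2309.12265 — 3 statements merged into one kernel-verified Lean document; each statement's English description precedes it below -/
import Mathlib

section
/- The number of parking functions of length n is (n+1)^{n-1}. -/
/-- Sequential parking process on a street with `m` spots: given the list of
preferences of the cars (in arrival order) and the set of already occupied
spots, return the list of spots in which the cars park (in arrival order),
or `none` if some car fails to park. Car with preference `a` parks in the
first unoccupied spot `j` with `a ≤ j ≤ m`. -/
def park (m : ℕ) : List ℕ → Finset ℕ → Option (List ℕ)
  | [], _ => some []
  | a :: as, occ =>
    match ((List.range' a (m + 1 - a)).filter fun j => decide (j ∉ occ)).head? with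
    | none => none
    | some p => (park m as (insert p occ)).map (p :: ·)

/-- `α` is an `(n, m)`-parking function: `n` cars with preferences in `[m]`,
all of which park successfully. -/
def IsPF (n m : ℕ) (α : List ℕ) : Prop :=
  α.length = n ∧ (∀ a ∈ α, 1 ≤ a ∧ a ≤ m) ∧ (park m α ∅).isSome

/-- Total displacement: the sum over cars of (parking spot − preference). -/
def disp (m : ℕ) (α : List ℕ) : ℕ :=
  match park m α ∅ with
  | some ps => ((ps.zip α).map fun x => x.1 - x.2).sum
  | none => 0

/-- The set of spots occupied at the end of the parking process. -/
def occSet (m : ℕ) (α : List ℕ) : Finset ℕ :=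
  match park m α ∅ with
  | some ps => ps.toFinset
  | none => ∅

/-- The characteristic function of the parking game of `α`: the total
displacement of the sub-tuple of preferences indexed by the coalition `S`,
parked on a street with `n` spots. -/
def gameCost (n : ℕ) (α : Fin n → ℕ) (S : Finset (Fin n)) : ℕ :=
  disp n ((S.sort (· ≤ ·)).map α)

/-- The Shapley value of a coalitional cost game `c` on players `Fin n`. -/
noncomputable def shapley (n : ℕ) (c : Finset (Fin n) → ℕ) (i : Fin n) : ℚ :=
  (1 / (n.factorial : ℚ)) * ∑ π : Equiv.Perm (Fin n),
    ((c (Finset.univ.filter fun j => π j ≤ π i) : ℚ) -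
     (c (Finset.univ.filter fun j => π j < π i) : ℚ))

lemma head_filter_range' (q : ℕ → Bool) : ∀ (k a p : ℕ),
    ((List.range' a k).filter q).head? = some p →
    q p = true ∧ a ≤ p ∧ p < a + k ∧ ∀ j, a ≤ j → j < p → q j = false := by
  intro k
  induction k with
  | zero => simp
  | succ k ih =>
    intro a p h
    rw [List.range'_succ] at h
    by_cases hq : q a = true
    · rw [List.filter_cons_of_pos hq] at h
      simp only [List.head?_cons, Option.some_inj] at h
      subst h
      exact ⟨hq, le_refl _, by omega, fun j h1 h2 => absurd h1 (by omega)⟩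
    · rw [List.filter_cons_of_neg hq] at h
      obtain ⟨h1, h2, h3, h4⟩ := ih (a+1) p h
      refine ⟨h1, by omega, by omega, fun j hj1 hj2 => ?_⟩
      rcases Nat.eq_or_lt_of_le hj1 with rfl | hlt
      · simpa using hq
      · exact h4 j hlt hj2

lemma park_spec (m : ℕ) : ∀ (α : List ℕ) (occ : Finset ℕ) (ps : List ℕ),
    park m α occ = some ps →
    ps.length = α.length ∧ ps.Nodup ∧ (∀ p ∈ ps, p ∉ occ) ∧
      (∀ x ∈ ps.zip α, x.2 ≤ x.1 ∧ x.1 ≤ m) := by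
  intro α
  induction α with
  | nil => intro occ ps h; simp [park] at h; subst h; simp
  | cons a as ih =>
    intro occ ps h
    rw [park] at h
    rcases hh : ((List.range' a (m + 1 - a)).filter fun j => decide (j ∉ occ)).head? with _ | p
    · rw [hh] at h; simp at h
    · rw [hh] at h
      simp only [Option.map_eq_some_iff] at h
      obtain ⟨ps', hps', rfl⟩ := h
      obtain ⟨hq, hap, hpl, _⟩ := head_filter_range' _ _ _ _ hh
      have hpocc : p ∉ occ := by simpa using hq
      have ham : a ≤ m := by
        by_contra hc
        have : m + 1 - a = 0 := by omega
        rw [this] at hpl; omega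
      have hpm : p ≤ m := by omega
      obtain ⟨h1, h2, h3, h4⟩ := ih _ _ hps'
      refine ⟨by simpa using h1, ?_, ?_, ?_⟩
      · refine List.nodup_cons.2 ⟨fun hc => ?_, h2⟩
        exact h3 p hc (Finset.mem_insert_self p occ)
      · intro p' hp'
        rcases List.mem_cons.1 hp' with rfl | hp'
        · exact hpocc
        · exact fun hc => h3 p' hp' (Finset.mem_insert_of_mem hc)
      · intro x hx
        rcases List.mem_cons.1 (by simpa [List.zip] using hx : x ∈ (p, a) :: ps'.zip as) with rfl | hx
        · exact ⟨hap, hpm⟩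
        · exact h4 x hx

lemma park_fail (m : ℕ) : ∀ (α : List ℕ) (occ : Finset ℕ),
    (∀ a ∈ α, 1 ≤ a ∧ a ≤ m) → park m α occ = none →
    ∃ b, 1 ≤ b ∧ b ≤ m ∧ (b = 1 ∨ (b-1) ∉ occ) ∧
      m + 1 - b < ((Finset.Icc b m).filter (· ∈ occ)).card +
        α.countP (fun x => decide (b ≤ x)) := by
  intro α
  induction α with
  | nil => intro occ _ h; simp [park] at h
  | cons a as ih =>
    intro occ hbd h
    obtain ⟨ha1, ham⟩ := hbd a List.mem_cons_self
    rw [park] at h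
    rcases hh : ((List.range' a (m + 1 - a)).filter fun j => decide (j ∉ occ)).head? with _ | p
    · -- head fails: all of [a, m] occupied
      have hall : ∀ j ∈ Finset.Icc a m, j ∈ occ := by
        intro j hj
        simp only [Finset.mem_Icc] at hj
        by_contra hc
        have hmem : j ∈ (List.range' a (m + 1 - a)).filter fun j => decide (j ∉ occ) := by
          rw [List.mem_filter]
          exact ⟨List.mem_range'_1.2 ⟨hj.1, by omega⟩, by simpa using hc⟩
        rw [List.head?_eq_none_iff.1 hh] at hmem
        simp at hmem
      have hex : ∃ b', ∀ j ∈ Finset.Icc b' m, j ∈ occ := ⟨a, hall⟩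
      set b0 := Nat.find hex with hb0
      have hPb0 : ∀ j ∈ Finset.Icc b0 m, j ∈ occ := Nat.find_spec hex
      have hb0a : b0 ≤ a := Nat.find_le hall
      set b := max b0 1 with hb
      have hPb : ∀ j ∈ Finset.Icc b m, j ∈ occ := by
        intro j hj; exact hPb0 j (Finset.mem_Icc.2 ⟨le_trans (le_max_left _ _) (Finset.mem_Icc.1 hj).1, (Finset.mem_Icc.1 hj).2⟩)
      refine ⟨b, le_max_right _ _, by omega, ?_, ?_⟩
      · by_cases hb01 : b0 ≤ 1
        · exact Or.inl (by omega)
        · have hbb0 : b = b0 := by omega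
          have := Nat.find_min hex (m := b0 - 1) (by omega)
          push_neg at this
          obtain ⟨j, hj, hjocc⟩ := this
          simp only [Finset.mem_Icc] at hj
          right
          rcases Nat.eq_or_lt_of_le hj.1 with heq | hlt
          · rw [hbb0, heq]; exact hjocc
          · exact absurd (hPb0 j (Finset.mem_Icc.2 ⟨by omega, hj.2⟩)) hjocc
      · rw [Finset.filter_true_of_mem hPb, Nat.card_Icc,
          List.countP_cons_of_pos (p := fun x => decide (b ≤ x)) (by simp; omega)]
        omega
    · rw [hh] at h
      simp only [Option.map_eq_none_iff] at h
      have hrec : park m as (insert p occ) = none := h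
      obtain ⟨hq, hap, hpl, hfirst⟩ := head_filter_range' _ _ _ _ hh
      have hpocc : p ∉ occ := by simpa using hq
      have hpm : p ≤ m := by omega
      obtain ⟨b, hb1, hbm, hbfree, hcard⟩ := ih (insert p occ)
        (fun x hx => hbd x (List.mem_cons_of_mem a hx)) hrec
      have hbfree' : b = 1 ∨ b - 1 ∉ occ := by
        rcases hbfree with h1 | h2
        · exact Or.inl h1
        · exact Or.inr fun hc => h2 (Finset.mem_insert_of_mem hc)
      refine ⟨b, hb1, hbm, hbfree', ?_⟩
      by_cases hbp : b ≤ p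
      · -- then b ≤ a
        have hba : b ≤ a := by
          by_contra hc
          push_neg at hc
          rcases hbfree with h1 | h2
          · omega
          · have hb1p : b - 1 ≠ p := fun he => h2 (he ▸ Finset.mem_insert_self p occ)
            have := hfirst (b-1) (by omega) (by omega)
            simp only [decide_eq_false_iff_not, not_not] at this
            exact h2 (Finset.mem_insert_of_mem this)
        have hins : (Finset.Icc b m).filter (· ∈ insert p occ) =
            insert p ((Finset.Icc b m).filter (· ∈ occ)) := by
          ext j
          simp only [Finset.mem_filter, Finset.mem_insert, Finset.mem_Icc]
          constructor
          · rintro ⟨hj, hj2 | hj2⟩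
            · exact Or.inl hj2
            · exact Or.inr ⟨hj, hj2⟩
          · rintro (rfl | ⟨hj, hj2⟩)
            · exact ⟨⟨hbp, hpm⟩, Or.inl rfl⟩
            · exact ⟨hj, Or.inr hj2⟩
        rw [hins, Finset.card_insert_of_notMem (by simp [hpocc])] at hcard
        rw [List.countP_cons_of_pos (p := fun x => decide (b ≤ x)) (by simp; omega)]
        omega
      · have hins : (Finset.Icc b m).filter (· ∈ insert p occ) =
            (Finset.Icc b m).filter (· ∈ occ) := by
          apply Finset.filter_congr
          intro j hj
          simp only [Finset.mem_Icc] at hj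
          simp only [Finset.mem_insert, eq_iff_iff, decide_eq_decide]
          constructor
          · rintro (rfl | hj2)
            · omega
            · exact hj2
          · exact Or.inr
        rw [hins] at hcard
        calc m + 1 - b < _ + List.countP _ as := hcard
          _ ≤ _ + List.countP _ (a :: as) := by
              rw [List.countP_cons]; omega

lemma parkable_iff (m : ℕ) (α : List ℕ) (hbd : ∀ a ∈ α, 1 ≤ a ∧ a ≤ m)
    (hlen : α.length = m) :
    (park m α ∅).isSome ↔ ∀ k, k ≤ m → k ≤ α.countP (fun x => decide (x ≤ k)) := by
  constructor
  · intro hs k hk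
    rw [Option.isSome_iff_exists] at hs
    obtain ⟨ps, hps⟩ := hs
    obtain ⟨hlen', hnd, _, hzip⟩ := park_spec m α ∅ ps hps
    have hle : ps.length ≤ α.length := le_of_eq hlen'
    have hle' : α.length ≤ ps.length := le_of_eq hlen'.symm
    have hmem : ∀ p ∈ ps, 1 ≤ p ∧ p ≤ m := by
      intro p hp
      rw [← List.map_fst_zip (l₁ := ps) (l₂ := α) hle, List.mem_map] at hp
      obtain ⟨x, hx, rfl⟩ := hp
      obtain ⟨h1, h2⟩ := hzip x hx
      have := (hbd x.2 (List.of_mem_zip hx).2).1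
      exact ⟨le_trans this h1, h2⟩
    have htf : ps.toFinset = Finset.Icc 1 m := by
      apply Finset.eq_of_subset_of_card_le
      · intro p hp
        rw [List.mem_toFinset] at hp
        exact Finset.mem_Icc.2 (hmem p hp)
      · rw [List.toFinset_card_of_nodup hnd, Nat.card_Icc, hlen', hlen]; omega
    have e1 : ps.countP (fun x => decide (x ≤ k)) = k := by
      rw [List.countP_eq_length_filter, ← List.toFinset_card_of_nodup (hnd.filter _),
        List.toFinset_filter, htf]
      have : (Finset.Icc 1 m).filter (fun x => decide (x ≤ k) = true) = Finset.Icc 1 k := by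
        ext j
        simp only [Finset.mem_filter, Finset.mem_Icc, decide_eq_true_eq]
        omega
      rw [this, Nat.card_Icc]; omega
    calc k = ps.countP (fun x => decide (x ≤ k)) := e1.symm
      _ = (ps.zip α).countP (fun x => decide (x.1 ≤ k)) := by
          conv_lhs => rw [← List.map_fst_zip (l₁ := ps) (l₂ := α) hle]
          rw [List.countP_map]; rfl
      _ ≤ (ps.zip α).countP (fun x => decide (x.2 ≤ k)) := by
          apply List.countP_mono_left
          intro x hx h
          simp only [decide_eq_true_eq] at h ⊢
          exact le_trans (hzip x hx).1 h
      _ = α.countP (fun x => decide (x ≤ k)) := by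
          conv_rhs => rw [← List.map_snd_zip (l₁ := ps) (l₂ := α) hle']
          rw [List.countP_map]; rfl
  · intro hc
    by_contra hs
    rw [Option.not_isSome_iff_eq_none] at hs
    obtain ⟨b, hb1, hbm, _, hcard⟩ := park_fail m α ∅ hbd hs
    rw [show ((Finset.Icc b m).filter (· ∈ (∅ : Finset ℕ))) = ∅ by simp] at hcard
    simp only [Finset.card_empty, Nat.zero_add] at hcard
    have hsplit := List.length_eq_countP_add_countP (fun x => decide (b ≤ x)) (l := α)
    have heq : α.countP (fun a => decide ¬(decide (b ≤ a)) = true) =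
        α.countP (fun x => decide (x ≤ b - 1)) := by
      apply List.countP_congr
      intro x _
      simp only [decide_eq_true_eq, decide_eq_decide]
      omega
    have := hc (b-1) (by omega)
    rw [heq] at hsplit
    omega

lemma sum_shift (n : ℕ) (f : ZMod (n+1) → ℤ) (z : ZMod (n+1)) :
    ∑ j ∈ Finset.range (n+1), f (z + (j : ZMod (n+1))) = ∑ v, f v := by
  refine Finset.sum_nbij' (fun j => z + (j : ZMod (n+1))) (fun v => (v - z).val)
    (fun a _ => Finset.mem_univ _) (fun v _ => Finset.mem_range.2 (ZMod.val_lt _))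
    ?_ ?_ (fun a _ => rfl)
  · intro a ha
    rw [add_sub_cancel_left, ZMod.val_cast_of_lt (Finset.mem_range.1 ha)]
  · intro v _
    rw [ZMod.natCast_rightInverse (v - z), add_sub_cancel]

lemma sum_range_add_shift (n : ℕ) (d : ZMod (n+1) → ℤ) (c : ZMod (n+1)) (k l : ℕ) :
    ∑ j ∈ Finset.range (k + l), d (c + (j : ZMod (n+1))) =
      (∑ j ∈ Finset.range k, d (c + (j : ZMod (n+1)))) +
        ∑ j ∈ Finset.range l, d (c + (k : ZMod (n+1)) + (j : ZMod (n+1))) := by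
  rw [Finset.sum_range_add]
  congr 1
  apply Finset.sum_congr rfl
  intro j _
  congr 1
  push_cast
  ring

lemma cycle_lemma (n : ℕ) (d : ZMod (n+1) → ℤ) (hd : ∀ v, -1 ≤ d v)
    (hsum : ∑ v, d v = -1) :
    ∃! c : ZMod (n+1), ∀ k, k ≤ n → 0 ≤ ∑ j ∈ Finset.range k, d (c + (j : ZMod (n+1))) := by
  have hfull : ∀ c : ZMod (n+1), ∑ j ∈ Finset.range (n+1), d (c + (j : ZMod (n+1))) = -1 :=
    fun c => (sum_shift n d c).trans hsum
  set t : ℕ → ℤ := fun k => ∑ j ∈ Finset.range k, d ((j : ℕ) : ZMod (n+1)) with ht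
  have htadd : ∀ a l, t (a + l) = t a +
      ∑ j ∈ Finset.range l, d ((a : ZMod (n+1)) + (j : ZMod (n+1))) := by
    intro a l
    have := sum_range_add_shift n d 0 a l
    simpa [ht] using this
  have htshift : ∀ a, t (a + (n+1)) = t a - 1 := by
    intro a
    rw [htadd a (n+1), hfull]
    ring
  have hex : ∃ s, s ≤ n ∧ ∀ j, j ≤ n → t s ≤ t j := by
    obtain ⟨s₀, hmem, hmin⟩ := Finset.exists_min_image (Finset.range (n+1)) t
      ⟨0, Finset.mem_range.2 (by omega)⟩
    rw [Finset.mem_range] at hmem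
    exact ⟨s₀, by omega, fun j hj => hmin j (Finset.mem_range.2 (by omega))⟩
  set s := Nat.find hex with hs
  obtain ⟨hsn, hsmin⟩ := Nat.find_spec hex
  have hfirst : ∀ j, j < s → t s < t j := by
    intro j hj
    have hnot := Nat.find_min hex hj
    push_neg at hnot
    obtain ⟨j', hj', hlt⟩ := hnot (by omega)
    exact lt_of_le_of_lt (hsmin j' hj') hlt
  refine ⟨(s : ZMod (n+1)), ?_, ?_⟩
  · -- goodness
    intro k hk
    have key : ∑ j ∈ Finset.range k, d ((s : ZMod (n+1)) + (j : ZMod (n+1))) =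
        t (s + k) - t s := by
      rw [htadd s k]; ring
    rw [key, sub_nonneg]
    by_cases hc : s + k ≤ n
    · exact hsmin _ hc
    · have hj : s + k = (s + k - (n+1)) + (n+1) := by omega
      have := htshift (s + k - (n+1))
      rw [← hj] at this
      rw [this]
      have := hfirst (s + k - (n+1)) (by omega)
      omega
  · -- uniqueness
    intro c' hc'
    by_contra hne
    set k := (c' - (s : ZMod (n+1))).val with hkdef
    have hk1 : 1 ≤ k := by
      rcases Nat.eq_zero_or_pos k with h0 | h
      · exact absurd ((ZMod.val_eq_zero _).1 h0) (sub_ne_zero.2 hne)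
      · exact h
    have hkn : k ≤ n := by
      have := ZMod.val_lt (c' - (s : ZMod (n+1)))
      omega
    have hgood : ∀ kk, kk ≤ n → 0 ≤ ∑ j ∈ Finset.range kk,
        d ((s : ZMod (n+1)) + (j : ZMod (n+1))) := by
      intro kk hkk
      have key : ∑ j ∈ Finset.range kk, d ((s : ZMod (n+1)) + (j : ZMod (n+1))) =
          t (s + kk) - t s := by rw [htadd s kk]; ring
      rw [key, sub_nonneg]
      by_cases hc : s + kk ≤ n
      · exact hsmin _ hc
      · have hj : s + kk = (s + kk - (n+1)) + (n+1) := by omega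
        have h2 := htshift (s + kk - (n+1))
        rw [← hj] at h2
        rw [h2]
        have := hfirst (s + kk - (n+1)) (by omega)
        omega
    have h1 : 0 ≤ ∑ j ∈ Finset.range k, d ((s : ZMod (n+1)) + (j : ZMod (n+1))) :=
      hgood k hkn
    have h2 : 0 ≤ ∑ j ∈ Finset.range (n+1-k), d (c' + (j : ZMod (n+1))) :=
      hc' _ (by omega)
    have hsplit := sum_range_add_shift n d (s : ZMod (n+1)) k (n+1-k)
    rw [show k + (n+1-k) = n+1 by omega, hfull] at hsplit
    rw [show ((s : ZMod (n+1)) + (k : ZMod (n+1))) = c' by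
      rw [hkdef, ZMod.natCast_rightInverse (c' - (s : ZMod (n+1)))]; ring] at hsplit
    omega

lemma countP_ofFn {n : ℕ} (p : ℕ → Bool) (α : Fin n → ℕ) :
    (List.ofFn α).countP p = (Finset.univ.filter fun i => p (α i)).card := by
  rw [List.ofFn_eq_map, List.countP_map, List.countP_eq_length_filter,
    ← List.toFinset_card_of_nodup ((List.nodup_finRange n).filter _),
    List.toFinset_filter, List.toFinset_finRange]
  rfl

lemma isPF_iff {n : ℕ} (α : Fin n → ℕ) :
    IsPF n n (List.ofFn α) ↔ (∀ i, 1 ≤ α i ∧ α i ≤ n) ∧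
      ∀ k, k ≤ n → k ≤ (Finset.univ.filter fun i => α i ≤ k).card := by
  have hmem : (∀ a ∈ List.ofFn α, 1 ≤ a ∧ a ≤ n) ↔ ∀ i, 1 ≤ α i ∧ α i ≤ n := by
    constructor
    · intro h i; exact h (α i) (by rw [List.mem_ofFn]; exact ⟨i, rfl⟩)
    · intro h a ha; rw [List.mem_ofFn] at ha; obtain ⟨i, rfl⟩ := ha; exact h i
  have hcnt : ∀ k, (List.ofFn α).countP (fun x => decide (x ≤ k)) =
      (Finset.univ.filter fun i => α i ≤ k).card := by
    intro k
    rw [countP_ofFn]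
    congr 1
    apply Finset.filter_congr
    intro i _
    simp
  constructor
  · rintro ⟨hlen, hbd, hsome⟩
    rw [parkable_iff n _ hbd (by simpa using hlen)] at hsome
    exact ⟨hmem.1 hbd, fun k hk => by rw [← hcnt]; exact hsome k hk⟩
  · rintro ⟨hbd, hc⟩
    refine ⟨by simp, hmem.2 hbd, ?_⟩
    rw [parkable_iff n _ (hmem.2 hbd) (by simp)]
    intro k hk
    rw [hcnt]
    exact hc k hk

section C
variable {n : ℕ}

/-- number of cars preferring `v` -/
def cnt (β : Fin n → ZMod (n+1)) (v : ZMod (n+1)) : ℕ :=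
  (Finset.univ.filter fun i => β i = v).card

def decode (β : Fin n → ZMod (n+1)) (c : ZMod (n+1)) : Fin n → ℕ :=
  fun i => (β i - c).val + 1

def Good (β : Fin n → ZMod (n+1)) (c : ZMod (n+1)) : Prop :=
  ∀ k, k ≤ n → 0 ≤ ∑ j ∈ Finset.range k, ((cnt β (c + (j : ZMod (n+1))) : ℤ) - 1)

lemma sum_cnt (β : Fin n → ZMod (n+1)) : ∑ v, cnt β v = n := by
  have := Finset.card_eq_sum_card_fiberwise
    (f := β) (s := Finset.univ) (t := Finset.univ) (fun x _ => Finset.mem_univ _)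
  simp only [Finset.card_univ, Fintype.card_fin] at this
  exact this.symm

lemma count_decode (β : Fin n → ZMod (n+1)) (c : ZMod (n+1)) (k : ℕ) (hk : k ≤ n + 1) :
    (Finset.univ.filter fun i => decode β c i ≤ k).card =
      ∑ j ∈ Finset.range k, cnt β (c + (j : ZMod (n+1))) := by
  have hpred : (Finset.univ.filter fun i => decode β c i ≤ k) =
      (Finset.univ.filter fun i => (β i - c).val < k) := by
    apply Finset.filter_congr; intro i _
    simp only [decode, eq_iff_iff]
    omega
  rw [hpred]
  rw [Finset.card_eq_sum_card_fiberwise (f := fun i => (β i - c).val)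
    (t := Finset.range k) (fun x hx => Finset.mem_range.2 (Finset.mem_filter.1 hx).2)]
  apply Finset.sum_congr rfl
  intro b hb
  rw [Finset.mem_range] at hb
  congr 1
  rw [Finset.filter_filter]
  apply Finset.filter_congr
  intro i _
  simp only [eq_iff_iff]
  constructor
  · rintro ⟨_, hv⟩
    have : β i - c = (b : ZMod (n+1)) := by
      rw [← hv, ZMod.natCast_rightInverse (β i - c)]
    rw [← this]; ring
  · intro h
    have hbc : β i - c = (b : ZMod (n+1)) := by rw [h]; ring
    rw [hbc, ZMod.val_cast_of_lt (by omega)]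
    exact ⟨hb, rfl⟩

lemma good_iff_pf (β : Fin n → ZMod (n+1)) (c : ZMod (n+1)) :
    Good β c ↔ IsPF n n (List.ofFn (decode β c)) := by
  rw [isPF_iff]
  have hsum_d : ∀ k, ∑ j ∈ Finset.range k, ((cnt β (c + (j : ZMod (n+1))) : ℤ) - 1) =
      (∑ j ∈ Finset.range k, (cnt β (c + (j : ZMod (n+1))) : ℤ)) - k := by
    intro k
    rw [Finset.sum_sub_distrib]
    simp
  have hcard : ∀ k, k ≤ n + 1 →
      ((Finset.univ.filter fun i => decode β c i ≤ k).card : ℤ) =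
      ∑ j ∈ Finset.range k, (cnt β (c + (j : ZMod (n+1))) : ℤ) := by
    intro k hk
    rw [count_decode β c k hk]
    push_cast
    rfl
  constructor
  · intro hg
    have hcnts : ∀ k, k ≤ n → k ≤ (Finset.univ.filter fun i => decode β c i ≤ k).card := by
      intro k hk
      have := hg k hk
      rw [hsum_d, sub_nonneg, ← hcard k (by omega)] at this
      exact_mod_cast this
    refine ⟨?_, hcnts⟩
    intro i
    refine ⟨by simp [decode], ?_⟩
    have h1 := hcnts n (le_refl n)
    have h2 : (Finset.univ.filter fun i => decode β c i ≤ n).card ≤ n := by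
      calc _ ≤ (Finset.univ : Finset (Fin n)).card := Finset.card_filter_le _ _
        _ = n := by simp
    have heq : (Finset.univ.filter fun i => decode β c i ≤ n).card =
        (Finset.univ : Finset (Fin n)).card := by simp; omega
    have := (Finset.filter_card_eq heq i (Finset.mem_univ i))
    exact this
  · rintro ⟨hbd, hcnts⟩
    intro k hk
    rw [hsum_d, sub_nonneg, ← hcard k (by omega)]
    exact_mod_cast hcnts k hk

end C

section D
variable {n : ℕ}

def encode (α : Fin n → ℕ) (c : ZMod (n+1)) : Fin n → ZMod (n+1) :=
  fun i => ((α i - 1 : ℕ) : ZMod (n+1)) + c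

lemma decode_encode (α : Fin n → ℕ) (c : ZMod (n+1)) (hbd : ∀ i, 1 ≤ α i ∧ α i ≤ n) :
    decode (encode α c) c = α := by
  funext i
  obtain ⟨h1, h2⟩ := hbd i
  simp only [decode, encode, add_sub_cancel_right]
  rw [ZMod.val_cast_of_lt (by omega)]
  omega

lemma encode_decode (β : Fin n → ZMod (n+1)) (c : ZMod (n+1)) :
    encode (decode β c) c = β := by
  funext i
  simp only [decode, encode, Nat.add_sub_cancel]
  rw [ZMod.natCast_rightInverse (β i - c)]
  ring

lemma existsUnique_good (β : Fin n → ZMod (n+1)) : ∃! c, Good β c := by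
  have := cycle_lemma n (fun v => (cnt β v : ℤ) - 1)
    (fun v => by
      show (-1:ℤ) ≤ (cnt β v : ℤ) - 1
      have : (0:ℤ) ≤ (cnt β v : ℤ) := Int.natCast_nonneg _
      omega)
    (by
      rw [Finset.sum_sub_distrib, Finset.sum_const, Finset.card_univ, ZMod.card]
      have : ∑ v, (cnt β v : ℤ) = (n : ℤ) := by
        rw [← Nat.cast_sum, sum_cnt]
      rw [this]; push_cast; ring)
  exact this

noncomputable def pfEquiv (n : ℕ) :
    {α : Fin n → ℕ // IsPF n n (List.ofFn α)} × ZMod (n+1) ≃ (Fin n → ZMod (n+1)) := by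
  apply Equiv.ofBijective (fun x => encode x.1.1 x.2)
  constructor
  · rintro ⟨⟨α, hα⟩, c⟩ ⟨⟨α', hα'⟩, c'⟩ h
    simp only [] at h
    simp only [Prod.mk.injEq, Subtype.mk.injEq]
    have hbd := ((isPF_iff α).1 hα).1
    have hbd' := ((isPF_iff α').1 hα').1
    have hdec : decode (encode α c) c = α := decode_encode α c hbd
    have hdec' : decode (encode α' c') c' = α' := decode_encode α' c' hbd'
    have hg : Good (encode α c) c := (good_iff_pf _ c).2 (by rw [hdec]; exact hα)
    have hg' : Good (encode α c) c' := by
      rw [h]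
      exact (good_iff_pf _ c').2 (by rw [hdec']; exact hα')
    obtain ⟨c₀, _, huniq⟩ := existsUnique_good (encode α c)
    have hcc : c = c' := by rw [huniq c hg, huniq c' hg']
    subst hcc
    refine ⟨?_, rfl⟩
    rw [← hdec, ← hdec', h]
  · intro β
    obtain ⟨c, hc, _⟩ := existsUnique_good β
    exact ⟨(⟨decode β c, (good_iff_pf β c).1 hc⟩, c), encode_decode β c⟩

/-- the number of parking functions of length `n` is `(n+1)^(n-1)`. -/
theorem stmt2 (n : ℕ) :
    Nat.card {α : Fin n → ℕ // IsPF n n (List.ofFn α)} = (n + 1) ^ (n - 1) := by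
  have h := Nat.card_congr (pfEquiv n)
  rw [Nat.card_prod] at h
  have h1 : Nat.card (ZMod (n+1)) = n + 1 := by
    rw [Nat.card_eq_fintype_card, ZMod.card]
  have h2 : Nat.card (Fin n → ZMod (n+1)) = (n+1)^n := by
    rw [Nat.card_eq_fintype_card, Fintype.card_fun, ZMod.card, Fintype.card_fin]
  rw [h1, h2] at h
  have h3 : (n+1)^n = (n+1)^(n-1) * (n+1) := by
    rcases n with _ | m
    · norm_num
    · rw [Nat.succ_sub_one, pow_succ]
  rw [h3] at h
  exact Nat.eq_of_mul_eq_mul_right (by omega) h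

end D
end

section
/- Total displacement of (n,m)-parking functions is permutation-invariant: if α ∈ PF_{n,m} and π ∈ S_n, then d(α) = d(π(α)). -/
/-! ### Auxiliary development -/

/-- The first free spot `j` with `a ≤ j ≤ m` not in `occ`. -/
def ff (m : ℕ) (occ : Finset ℕ) (a : ℕ) : Option ℕ :=
  ((List.range' a (m + 1 - a)).filter fun j => decide (j ∉ occ)).head?

lemma park_cons_none {m a : ℕ} {as : List ℕ} {occ : Finset ℕ}
    (h : ff m occ a = none) : park m (a :: as) occ = none := by
  unfold ff at h
  unfold park
  rw [h]

lemma park_cons_some {m a p : ℕ} {as : List ℕ} {occ : Finset ℕ}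
    (h : ff m occ a = some p) :
    park m (a :: as) occ = (park m as (insert p occ)).map (p :: ·) := by
  unfold ff at h
  conv_lhs => rw [park]
  rw [h]

lemma head?_filter_range' (P : ℕ → Bool) (a k p : ℕ) :
    ((List.range' a k).filter P).head? = some p ↔
      P p ∧ a ≤ p ∧ p < a + k ∧ ∀ j, a ≤ j → j < p → ¬ P j := by
  induction k generalizing a with
  | zero =>
    simp only [List.range', List.filter_nil, List.head?_nil]
    constructor
    · intro h; exact absurd h (by simp)
    · rintro ⟨-, h1, h2, -⟩; omega
  | succ k ih =>
    rw [List.range'_succ, List.filter_cons]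
    by_cases hPa : P a
    · simp only [hPa, if_pos, List.head?_cons, Option.some_inj]
      constructor
      · rintro rfl
        exact ⟨hPa, le_refl _, by omega, fun j h1 h2 => by omega⟩
      · rintro ⟨h1, h2, h3, h4⟩
        by_contra hne
        exact h4 a (le_refl _) (by omega) hPa
    · simp only [hPa, if_neg, Bool.false_eq_true, not_false_eq_true, ite_false]
      rw [ih]
      constructor
      · rintro ⟨h1, h2, h3, h4⟩
        refine ⟨h1, by omega, by omega, fun j hj1 hj2 => ?_⟩
        rcases eq_or_lt_of_le hj1 with rfl | hlt
        · exact hPa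
        · exact h4 j hlt hj2
      · rintro ⟨h1, h2, h3, h4⟩
        have hpa : p ≠ a := fun h => hPa (h ▸ h1)
        exact ⟨h1, by omega, by omega, fun j hj1 hj2 => h4 j (by omega) hj2⟩

lemma ff_some {m a p : ℕ} {occ : Finset ℕ} :
    ff m occ a = some p ↔
      p ∉ occ ∧ a ≤ p ∧ p ≤ m ∧ ∀ j, a ≤ j → j < p → j ∈ occ := by
  unfold ff
  rw [head?_filter_range']
  simp only [decide_eq_true_eq, Bool.not_eq_true, decide_eq_false_iff_not, not_not]
  constructor
  · rintro ⟨h1, h2, h3, h4⟩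
    exact ⟨h1, h2, by omega, fun j hj1 hj2 => by
      have := h4 j hj1 hj2; simpa using this⟩
  · rintro ⟨h1, h2, h3, h4⟩
    exact ⟨h1, h2, by omega, fun j hj1 hj2 => by simpa using h4 j hj1 hj2⟩

lemma ff_none {m a : ℕ} {occ : Finset ℕ} :
    ff m occ a = none ↔ ∀ j, a ≤ j → j ≤ m → j ∈ occ := by
  unfold ff
  rw [List.head?_eq_none_iff, List.filter_eq_nil_iff]
  simp only [List.mem_range', decide_eq_true_eq, not_not]
  constructor
  · intro h j hj1 hj2
    exact h j ⟨j - a, by omega⟩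
  · rintro h j ⟨i, hi, rfl⟩
    exact h _ (by omega) (by omega)

lemma map_cons_sum (o : Option (List ℕ)) (p : ℕ) :
    (o.map (p :: ·)).map List.sum = (o.map List.sum).map (p + ·) := by
  cases o <;> simp

/-- Swapping the first two cars does not change success nor the total sum of
occupied spots. -/
lemma park_swap (m a b : ℕ) (as : List ℕ) (occ : Finset ℕ) :
    (park m (a :: b :: as) occ).map List.sum =
    (park m (b :: a :: as) occ).map List.sum := by
  cases hfa : ff m occ a with
  | none =>
    rw [park_cons_none hfa]
    cases hfb : ff m occ b with
    | none => rw [park_cons_none hfb]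
    | some p' =>
      rw [park_cons_some hfb]
      have : ff m (insert p' occ) a = none := by
        rw [ff_none] at hfa ⊢
        intro j h1 h2; exact Finset.mem_insert_of_mem (hfa j h1 h2)
      rw [park_cons_none this]
      rfl
  | some p =>
    cases hfb : ff m occ b with
    | none =>
      rw [park_cons_none hfb, park_cons_some hfa]
      have : ff m (insert p occ) b = none := by
        rw [ff_none] at hfb ⊢
        intro j h1 h2; exact Finset.mem_insert_of_mem (hfb j h1 h2)
      rw [park_cons_none this]
      rfl
    | some p' =>
      obtain ⟨ha1, ha2, ha3, ha4⟩ := ff_some.mp hfa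
      obtain ⟨hb1, hb2, hb3, hb4⟩ := ff_some.mp hfb
      by_cases hpp : p = p'
      · subst hpp
        -- after parking the first car at `p`, the options for `a` and `b`
        -- coincide
        have key : ff m (insert p occ) a = ff m (insert p occ) b := by
          cases hq : ff m (insert p occ) a with
          | none =>
            symm
            rw [ff_none] at hq ⊢
            intro j h1 h2
            rcases lt_trichotomy j p with h | h | h
            · exact Finset.mem_insert_of_mem (hb4 j h1 h)
            · subst h; exact Finset.mem_insert_self _ _
            · exact hq j (by omega) h2
          | some q =>
            obtain ⟨hq1, hq2, hq3, hq4⟩ := ff_some.mp hq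
            have hqp : p < q := by
              rcases lt_trichotomy q p with h | h | h
              · exact absurd (Finset.mem_insert_of_mem (ha4 q hq2 h)) hq1
              · exact absurd (h ▸ Finset.mem_insert_self _ _) hq1
              · exact h
            symm
            rw [ff_some]
            refine ⟨hq1, by omega, hq3, fun j hj1 hj2 => ?_⟩
            rcases lt_trichotomy j p with h | h | h
            · exact Finset.mem_insert_of_mem (hb4 j hj1 h)
            · subst h; exact Finset.mem_insert_self _ _
            · exact hq4 j (by omega) hj2
        rw [park_cons_some hfa, park_cons_some hfb]
        cases hq : ff m (insert p occ) a with
        | none =>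
          rw [park_cons_none (key ▸ hq), park_cons_none hq]
        | some q =>
          rw [park_cons_some (key ▸ hq), park_cons_some hq]
      · -- the two cars take the same two spots, in either order
        have hA : ff m (insert p occ) b = some p' := by
          rw [ff_some]
          refine ⟨?_, hb2, hb3, fun j hj1 hj2 => Finset.mem_insert_of_mem (hb4 j hj1 hj2)⟩
          simp only [Finset.mem_insert, not_or]
          exact ⟨fun h => hpp h.symm, hb1⟩
        have hB : ff m (insert p' occ) a = some p := by
          rw [ff_some]
          refine ⟨?_, ha2, ha3, fun j hj1 hj2 => Finset.mem_insert_of_mem (ha4 j hj1 hj2)⟩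
          simp only [Finset.mem_insert, not_or]
          exact ⟨hpp, ha1⟩
        rw [park_cons_some hfa, park_cons_some hA,
          park_cons_some hfb, park_cons_some hB,
          Finset.insert_comm p' p occ]
        cases park m as (insert p (insert p' occ)) <;> simp <;> omega

/-- Permuting the cars does not change success nor the sum of occupied spots. -/
lemma park_perm (m : ℕ) {l l' : List ℕ} (h : l.Perm l') :
    ∀ occ, (park m l occ).map List.sum = (park m l' occ).map List.sum := by
  induction h with
  | nil => intro _; rfl
  | cons a h ih =>
    intro occ
    cases hfa : ff m occ a with
    | none => rw [park_cons_none hfa, park_cons_none hfa]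
    | some p =>
      rw [park_cons_some hfa, park_cons_some hfa, map_cons_sum, map_cons_sum,
        ih (insert p occ)]
  | swap a b l => intro occ; exact park_swap m b a l occ
  | trans _ _ ih1 ih2 => intro occ; rw [ih1 occ, ih2 occ]

/-- Each car parks at or after its preference, so the total displacement is the
difference of the sums. -/
lemma park_disp_eq (m : ℕ) (l : List ℕ) :
    ∀ occ ps, park m l occ = some ps →
      l.sum ≤ ps.sum ∧
        ((ps.zip l).map fun x => x.1 - x.2).sum = ps.sum - l.sum := by
  induction l with
  | nil =>
    intro occ ps h
    have : ps = [] := by simpa [park] using h.symm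
    subst this; simp
  | cons a as ih =>
    intro occ ps h
    cases hfa : ff m occ a with
    | none => rw [park_cons_none hfa] at h; exact absurd h (by simp)
    | some p =>
      rw [park_cons_some hfa] at h
      obtain ⟨qs, hqs, rfl⟩ := Option.map_eq_some_iff.mp h
      obtain ⟨-, hap, -, -⟩ := ff_some.mp hfa
      obtain ⟨ih1, ih2⟩ := ih _ _ hqs
      constructor
      · simp only [List.sum_cons]; omega
      · simp only [List.zip_cons_cons, List.map_cons, List.sum_cons, ih2]
        omega

/-- total displacement of `(n,m)`-parking functions is
permutation-invariant: `d(α) = d(π(α))`. -/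
theorem stmt9 (n m : ℕ) (hnm : n ≤ m) (α : Fin n → ℕ) (π : Equiv.Perm (Fin n))
    (h : IsPF n m (List.ofFn α)) :
    disp m (List.ofFn α) = disp m (List.ofFn fun i => α (π.symm i)) := by
  obtain ⟨-, -, hsome⟩ := h
  set l := List.ofFn α with hl
  set l' := List.ofFn fun i => α (π.symm i) with hl'
  have hperm : l'.Perm l := by
    have := Equiv.Perm.ofFn_comp_perm π.symm α
    simpa [Function.comp_def] using this
  obtain ⟨ps, hps⟩ := Option.isSome_iff_exists.mp hsome
  have hmap := park_perm m hperm ∅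
  rw [hps] at hmap
  simp only [Option.map_some] at hmap
  obtain ⟨ps', hps', hsum⟩ := Option.map_eq_some_iff.mp hmap
  obtain ⟨hle, heq⟩ := park_disp_eq m l ∅ ps hps
  obtain ⟨hle', heq'⟩ := park_disp_eq m l' ∅ ps' hps'
  have hsum' : l'.sum = l.sum := hperm.sum_eq
  have d1 : disp m l = ps.sum - l.sum := by unfold disp; rw [hps]; exact heq
  have d2 : disp m l' = ps'.sum - l'.sum := by unfold disp; rw [hps']; exact heq'
  rw [d1, d2, hsum, hsum']
end

section
/- In a parking game, the marginal displacement of any single car joining a coalition is given by contiguous occupied blocks: if after the cars in S park, the preference spot a_i lies in a maximal contiguous block of occupied spots ending at spot t, then c_α(S ∪ {i}) - c_α(S) = t - a_i + 1; if spot a_i is unoccupied, then c_α(S ∪ {i}) = c_α(S). -/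
namespace Pk13

lemma isSome_map {α β : Type} (f : α → β) (x : Option α) :
    (Option.map f x).isSome = x.isSome := by cases x <;> rfl

/-- first free spot `≥ a`, `≤ m`, not in `occ` -/
def ff (m a : ℕ) (occ : Finset ℕ) : Option ℕ :=
  ((List.range' a (m + 1 - a)).filter fun j => decide (j ∉ occ)).head?

lemma park_cons (m a : ℕ) (as : List ℕ) (occ : Finset ℕ) :
    park m (a::as) occ = (ff m a occ).bind
      fun p => (park m as (insert p occ)).map (p :: ·) := by
  show (match ff m a occ with
    | none => none
    | some p => (park m as (insert p occ)).map (p :: ·)) = _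
  cases ff m a occ <;> rfl

lemma head?_filter_range' (P : ℕ → Bool) :
    ∀ k a p, ((List.range' a k).filter P).head? = some p ↔
      (a ≤ p ∧ p < a + k ∧ P p ∧ ∀ j, a ≤ j → j < p → ¬ P j) := by
  intro k
  induction k with
  | zero => intro a p; simp; omega
  | succ k ih =>
    intro a p
    rw [List.range'_succ]
    by_cases hPa : P a
    · rw [List.filter_cons_of_pos hPa]
      simp only [List.head?_cons, Option.some.injEq]
      constructor
      · rintro rfl; exact ⟨le_refl _, by omega, hPa, by omega⟩
      · rintro ⟨h1, h2, h3, h4⟩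
        by_contra hne
        exact h4 a le_rfl (by omega) hPa
    · rw [List.filter_cons_of_neg hPa]
      rw [ih (a+1) p]
      constructor
      · rintro ⟨h1, h2, h3, h4⟩
        refine ⟨by omega, by omega, h3, fun j hj1 hj2 => ?_⟩
        rcases Nat.eq_or_lt_of_le hj1 with rfl | h
        · simp [hPa]
        · exact h4 j h hj2
      · rintro ⟨h1, h2, h3, h4⟩
        have : a ≠ p := by rintro rfl; simp [hPa] at h3
        exact ⟨by omega, by omega, h3, fun j hj1 hj2 => h4 j (by omega) hj2⟩

lemma head?_filter_range'_none (P : ℕ → Bool) (k a : ℕ) :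
    ((List.range' a k).filter P).head? = none ↔
      ∀ j, a ≤ j → j < a + k → ¬ P j := by
  rw [List.head?_eq_none_iff, List.filter_eq_nil_iff]
  constructor
  · intro h j h1 h2; exact h j (by rw [List.mem_range'_1]; omega)
  · intro h j hj; rw [List.mem_range'_1] at hj; exact h j (by omega) (by omega)

lemma ff_eq_some {m a : ℕ} {occ : Finset ℕ} {p : ℕ} :
    ff m a occ = some p ↔
      (a ≤ p ∧ p ≤ m ∧ p ∉ occ ∧ ∀ j, a ≤ j → j < p → j ∈ occ) := by
  unfold ff
  rw [head?_filter_range']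
  by_cases ham : a ≤ m + 1
  · constructor
    · rintro ⟨h1, h2, h3, h4⟩
      refine ⟨h1, by omega, by simpa using h3, fun j hj1 hj2 => ?_⟩
      have := h4 j hj1 hj2; simpa using this
    · rintro ⟨h1, h2, h3, h4⟩
      refine ⟨h1, by omega, by simpa using h3, fun j hj1 hj2 => ?_⟩
      simpa using h4 j hj1 hj2
  · constructor
    · rintro ⟨h1, h2, h3, h4⟩; omega
    · rintro ⟨h1, h2, h3, h4⟩; omega

lemma ff_eq_none {m a : ℕ} {occ : Finset ℕ} :
    ff m a occ = none ↔ ∀ j, a ≤ j → j ≤ m → j ∈ occ := by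
  unfold ff
  rw [head?_filter_range'_none]
  by_cases ham : a ≤ m + 1
  · constructor
    · intro h j h1 h2; simpa using h j h1 (by omega)
    · intro h j h1 h2; simpa using h j h1 (by omega)
  · constructor
    · intro h j h1 h2; omega
    · intro h j h1 h2; omega

lemma ff_shrink {m a : ℕ} {occ occ' : Finset ℕ} {p : ℕ} (hsub : occ' ⊆ occ)
    (h : ff m a occ = some p) :
    ∃ p', ff m a occ' = some p' ∧ insert p' occ' ⊆ insert p occ := by
  rw [ff_eq_some] at h
  obtain ⟨h1, h2, h3, h4⟩ := h
  have hp' : p ∉ occ' := fun hc => h3 (hsub hc)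
  cases hff : ff m a occ' with
  | none =>
    rw [ff_eq_none] at hff
    exact absurd (hff p h1 h2) hp'
  | some p' =>
    refine ⟨p', rfl, ?_⟩
    rw [ff_eq_some] at hff
    obtain ⟨g1, g2, g3, g4⟩ := hff
    have hle : p' ≤ p := by
      by_contra hc
      exact h3 (hsub (g4 p h1 (by omega)))
    intro x hx
    rcases Finset.mem_insert.1 hx with rfl | hx
    · rcases Nat.eq_or_lt_of_le hle with rfl | hlt
      · exact Finset.mem_insert_self _ _
      · exact Finset.mem_insert_of_mem (h4 _ g1 hlt)
    · exact Finset.mem_insert_of_mem (hsub hx)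

lemma park_sublist_isSome {m : ℕ} : ∀ {l' l : List ℕ}, l'.Sublist l →
    ∀ {occ' occ : Finset ℕ}, occ' ⊆ occ →
    (park m l occ).isSome → (park m l' occ').isSome := by
  intro l' l hsl
  induction hsl with
  | slnil => intro _ _ _ _; simp [park]
  | cons a hsl ih =>
    intro occ' occ hsub hs
    rw [park_cons] at hs
    cases hff : ff m _ occ with
    | none => rw [hff] at hs; simp at hs
    | some p =>
      rw [hff] at hs
      simp only [Option.bind_some, isSome_map] at hs
      exact ih (hsub.trans (Finset.subset_insert _ _)) hs
  | cons_cons a hsl ih =>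
    intro occ' occ hsub hs
    rw [park_cons] at hs
    cases hff : ff m a occ with
    | none => rw [hff] at hs; simp at hs
    | some p =>
      rw [hff] at hs
      simp only [Option.bind_some, isSome_map] at hs
      obtain ⟨p', hff', hsub'⟩ := ff_shrink hsub hff
      rw [park_cons, hff']
      simp only [Option.bind_some, isSome_map]
      exact ih hsub' hs

lemma park_append {m : ℕ} : ∀ {l₁ l₂ : List ℕ} {occ : Finset ℕ},
    park m (l₁ ++ l₂) occ =
      (park m l₁ occ).bind fun ps => (park m l₂ (occ ∪ ps.toFinset)).map (fun qs => ps ++ qs) := by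
  intro l₁
  induction l₁ with
  | nil =>
    intro l₂ occ
    show park m l₂ occ = (park m l₂ (occ ∪ (∅ : Finset ℕ))).map _
    rw [Finset.union_empty]
    cases park m l₂ occ <;> simp
  | cons a l₁ ih =>
    intro l₂ occ
    show park m ((a :: l₁) ++ l₂) occ = _
    rw [List.cons_append, park_cons, park_cons]
    cases ff m a occ with
    | none => rfl
    | some p =>
      simp only [Option.bind_some, ih]
      cases hp : park m l₁ (insert p occ) with
      | none => simp
      | some ps =>
        simp only [Option.map_some, Option.bind_some, Option.map_map]
        have hocc : insert p occ ∪ ps.toFinset = occ ∪ (p :: ps).toFinset := by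
          ext x
          simp only [Finset.mem_union, Finset.mem_insert, List.toFinset_cons,
            List.mem_toFinset]
          tauto
        rw [hocc]
        cases park m l₂ (occ ∪ (p :: ps).toFinset) <;> simp

lemma park_spec {m : ℕ} : ∀ {l : List ℕ} {occ : Finset ℕ} {ps : List ℕ},
    park m l occ = some ps →
    ps.length = l.length ∧ ps.Nodup ∧ (∀ p ∈ ps, p ∉ occ ∧ p ≤ m) ∧
    ∀ pa ∈ ps.zip l, pa.2 ≤ pa.1 ∧ ∀ j, pa.2 ≤ j → j < pa.1 → j ∈ occ ∪ ps.toFinset := by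
  intro l
  induction l with
  | nil =>
    intro occ ps hp
    simp [park] at hp
    subst hp
    simp
  | cons a l ih =>
    intro occ ps hp
    rw [park_cons] at hp
    cases hff : ff m a occ with
    | none => rw [hff] at hp; simp at hp
    | some p =>
      rw [hff] at hp
      simp only [Option.bind_some] at hp
      obtain ⟨f1, f2, f3, f4⟩ := ff_eq_some.1 hff
      cases hq : park m l (insert p occ) with
      | none => rw [hq] at hp; simp at hp
      | some qs =>
        rw [hq] at hp
        simp only [Option.map_some, Option.some.injEq] at hp
        subst hp
        obtain ⟨i1, i2, i3, i4⟩ := ih hq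
        have hpnot : p ∉ qs := fun hc => (i3 p hc).1 (Finset.mem_insert_self _ _)
        refine ⟨by simp [i1], by simp [i2, hpnot], ?_, ?_⟩
        · intro q hq'
          rcases List.mem_cons.1 hq' with rfl | hq'
          · exact ⟨f3, f2⟩
          · exact ⟨fun hc => (i3 q hq').1 (Finset.mem_insert_of_mem hc), (i3 q hq').2⟩
        · intro pa hpa
          rcases List.mem_cons.1 (by exact_mod_cast hpa) with hpa1 | hpa1
          · have : pa = (p, a) := hpa1
            subst this
            refine ⟨f1, fun j hj1 hj2 => ?_⟩
            simp only [Finset.mem_union]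
            exact Or.inl (f4 j hj1 hj2)
          · obtain ⟨g1, g2⟩ := i4 pa hpa1
            refine ⟨g1, fun j hj1 hj2 => ?_⟩
            have := g2 j hj1 hj2
            simp only [Finset.mem_union, Finset.mem_insert] at this ⊢
            simp only [List.toFinset_cons, Finset.mem_insert]
            tauto

/-- profile of a parking run: final occupied set and total displacement -/
def prof (m : ℕ) (l : List ℕ) (occ : Finset ℕ) : Option (Finset ℕ × ℕ) :=
  (park m l occ).map fun ps => (ps.toFinset, ((ps.zip l).map fun x => x.1 - x.2).sum)

lemma prof_nil (m : ℕ) (occ : Finset ℕ) : prof m [] occ = some (∅, 0) := rfl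

lemma prof_cons (m a : ℕ) (l : List ℕ) (occ : Finset ℕ) :
    prof m (a :: l) occ = (ff m a occ).bind
      fun p => (prof m l (insert p occ)).map fun q => (insert p q.1, (p - a) + q.2) := by
  unfold prof
  rw [park_cons]
  cases ff m a occ with
  | none => rfl
  | some p =>
    simp only [Option.bind_some, Option.map_map]
    cases park m l (insert p occ) with
    | none => rfl
    | some ps => simp [List.zip_cons_cons]

lemma ff_none_mono {m a : ℕ} {occ occ' : Finset ℕ} (h : occ ⊆ occ')
    (hf : ff m a occ = none) : ff m a occ' = none := by
  rw [ff_eq_none] at hf ⊢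
  exact fun j h1 h2 => h (hf j h1 h2)

lemma ff_insert_ne {m a : ℕ} {occ : Finset ℕ} {p q : ℕ}
    (h : ff m a occ = some p) (hne : q ≠ p) : ff m a (insert q occ) = some p := by
  rw [ff_eq_some] at h ⊢
  obtain ⟨h1, h2, h3, h4⟩ := h
  refine ⟨h1, h2, ?_, fun j hj1 hj2 => Finset.mem_insert_of_mem (h4 j hj1 hj2)⟩
  simp only [Finset.mem_insert]
  push_neg
  exact ⟨fun hc => hne hc.symm, h3⟩

lemma ff_eq_start {m a b : ℕ} {occ : Finset ℕ} {p : ℕ}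
    (hap : a ≤ p) (hbp : b ≤ p)
    (ha : ∀ j, a ≤ j → j < p → j ∈ occ) (hb : ∀ j, b ≤ j → j < p → j ∈ occ) :
    ff m a (insert p occ) = ff m b (insert p occ) := by
  cases h : ff m b (insert p occ) with
  | none =>
    rw [ff_eq_none] at h ⊢
    intro j h1 h2
    by_cases hjb : b ≤ j
    · exact h j hjb h2
    · rcases Nat.lt_or_ge j p with hlt | hge
      · exact Finset.mem_insert_of_mem (ha j h1 hlt)
      · have : j = p := by omega
        subst this; exact Finset.mem_insert_self _ _
  | some q =>
    rw [ff_eq_some] at h ⊢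
    obtain ⟨h1, h2, h3, h4⟩ := h
    have hq : p < q := by
      rcases Nat.lt_or_ge p q with h' | h'
      · exact h'
      · exfalso
        rcases Nat.eq_or_lt_of_le h' with rfl | h''
        · exact h3 (Finset.mem_insert_self _ _)
        · exact h3 (Finset.mem_insert_of_mem (hb q h1 h''))
    refine ⟨by omega, h2, h3, fun j hj1 hj2 => ?_⟩
    by_cases hjb : b ≤ j
    · exact h4 j hjb hj2
    · rcases Nat.lt_or_ge j p with hlt | hge
      · exact Finset.mem_insert_of_mem (ha j hj1 hlt)
      · have : j = p := by omega
        subst this; exact Finset.mem_insert_self _ _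

lemma prof_swap (m x y : ℕ) (l : List ℕ) (occ : Finset ℕ) :
    prof m (y :: x :: l) occ = prof m (x :: y :: l) occ := by
  rw [prof_cons, prof_cons]
  cases hy : ff m y occ with
  | none =>
    cases hx : ff m x occ with
    | none => rfl
    | some p =>
      have : ff m y (insert p occ) = none := ff_none_mono (Finset.subset_insert _ _) hy
      simp [prof_cons, this]
  | some p =>
    cases hx : ff m x occ with
    | none =>
      have : ff m x (insert p occ) = none := ff_none_mono (Finset.subset_insert _ _) hx
      simp [prof_cons, this]
    | some p' =>
      simp only [Option.bind_some, prof_cons]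
      by_cases hpp : p' = p
      · subst hpp
        obtain ⟨a1, a2, a3, a4⟩ := ff_eq_some.1 hy
        obtain ⟨b1, b2, b3, b4⟩ := ff_eq_some.1 hx
        have heq : ff m x (insert p' occ) = ff m y (insert p' occ) :=
          ff_eq_start b1 a1 b4 a4
        rw [heq]
        cases hq : ff m y (insert p' occ) with
        | none => rfl
        | some q =>
          simp only [Option.bind_some]
          cases prof m l (insert q (insert p' occ)) with
          | none => rfl
          | some r =>
            simp only [Option.map_some, Option.some.injEq, Prod.mk.injEq]
            obtain ⟨c1, c2, c3, c4⟩ := ff_eq_some.1 hq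
            have hpq : p' < q := by
              rcases Nat.lt_or_ge p' q with h' | h'
              · exact h'
              · exfalso
                rcases Nat.eq_or_lt_of_le h' with rfl | h''
                · exact c3 (Finset.mem_insert_self _ _)
                · exact c3 (Finset.mem_insert_of_mem (a4 q c1 h''))
            constructor
            all_goals first
              | trivial
              | omega
              | (ext z; simp only [Finset.mem_insert]; tauto)
      · -- p' ≠ p : the two cars park in the same two spots in either order
        have h1 : ff m x (insert p occ) = some p' := ff_insert_ne hx (by omega)
        have h2 : ff m y (insert p' occ) = some p := ff_insert_ne hy hpp
        rw [h1, h2]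
        simp only [Option.bind_some]
        have hcomm : insert p' (insert p occ) = insert p (insert p' occ) := by
          ext z; simp only [Finset.mem_insert]; tauto
        rw [hcomm]
        cases prof m l (insert p (insert p' occ)) with
        | none => rfl
        | some r =>
          simp only [Option.map_some, Option.some.injEq, Prod.mk.injEq]
          constructor
          all_goals first
            | trivial
            | omega
            | (ext z; simp only [Finset.mem_insert]; tauto)

lemma prof_perm {m : ℕ} {l₁ l₂ : List ℕ} (h : l₁.Perm l₂) :
    ∀ occ, prof m l₁ occ = prof m l₂ occ := by
  induction h with
  | nil => intro occ; rfl
  | cons x _ ih =>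
    intro occ
    rw [prof_cons, prof_cons]
    cases ff m x occ with
    | none => rfl
    | some p => simp only [Option.bind_some, ih]
  | swap x y l => intro occ; exact prof_swap m x y l occ
  | trans _ _ ih₁ ih₂ => intro occ; rw [ih₁, ih₂]

lemma disp_occSet_of_perm {m : ℕ} {l₁ l₂ : List ℕ} (h : l₁.Perm l₂) :
    disp m l₁ = disp m l₂ ∧ occSet m l₁ = occSet m l₂ ∧
      (park m l₁ ∅).isSome = (park m l₂ ∅).isSome := by
  have hp := prof_perm (m := m) h (∅ : Finset ℕ)
  unfold prof at hp
  unfold disp occSet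
  cases h1 : park m l₁ ∅ with
  | none =>
    rw [h1] at hp
    cases h2 : park m l₂ ∅ with
    | none => exact ⟨rfl, rfl, rfl⟩
    | some ps => rw [h2] at hp; simp at hp
  | some ps =>
    rw [h1] at hp
    cases h2 : park m l₂ ∅ with
    | none => rw [h2] at hp; simp at hp
    | some qs =>
      rw [h2] at hp
      simp only [Option.map_some, Option.some.injEq, Prod.mk.injEq] at hp
      exact ⟨hp.2, hp.1, rfl⟩

lemma countP_zip_snd (q : ℕ → Bool) : ∀ (ps l : List ℕ), ps.length = l.length →
    (ps.zip l).countP (fun pa => q pa.2) = l.countP q := by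
  intro ps
  induction ps with
  | nil =>
    intro l h
    cases l with
    | nil => rfl
    | cons b l => simp at h
  | cons p ps ih =>
    intro l h
    cases l with
    | nil => simp at h
    | cons b l =>
      simp only [List.zip_cons_cons, List.countP_cons]
      rw [ih l (by simpa using h)]

lemma countP_zip_fst (q : ℕ → Bool) : ∀ (ps l : List ℕ), ps.length = l.length →
    (ps.zip l).countP (fun pa => q pa.1) = ps.countP q := by
  intro ps
  induction ps with
  | nil => intro l h; simp
  | cons p ps ih =>
    intro l h
    cases l with
    | nil => simp at h
    | cons b l =>
      simp only [List.zip_cons_cons, List.countP_cons]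
      rw [ih l (by simpa using h)]

lemma pairs_cover {ps l : List ℕ} (h : ps.length ≤ l.length) {p : ℕ} (hp : p ∈ ps) :
    ∃ pa ∈ ps.zip l, pa.1 = p := by
  have hm := List.map_fst_zip (l₁ := ps) (l₂ := l) h
  rw [← hm] at hp
  simpa using hp

/-- upper bound: the number of cars with preference `≥ s` is at most the
number of spots in `[s, m]`. -/
lemma count_le {m : ℕ} {l ps : List ℕ} (h : park m l ∅ = some ps) (s : ℕ) :
    l.countP (fun x => decide (s ≤ x)) ≤ m + 1 - s := by
  obtain ⟨hlen, hnd, hmem, hzip⟩ := park_spec h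
  have h1 : l.countP (fun x => decide (s ≤ x)) =
      (ps.zip l).countP (fun pa => decide (s ≤ pa.2)) :=
    (countP_zip_snd _ ps l hlen).symm
  rw [h1]
  set Z := (ps.zip l).filter (fun pa => decide (s ≤ pa.2)) with hZ
  have hcount : (ps.zip l).countP (fun pa => decide (s ≤ pa.2)) = Z.length :=
    List.countP_eq_length_filter
  rw [hcount]
  have hsub : Z.Sublist (ps.zip l) := List.filter_sublist
  have hndZ : (Z.map Prod.fst).Nodup := by
    have : (Z.map Prod.fst).Sublist ((ps.zip l).map Prod.fst) := hsub.map _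
    rw [List.map_fst_zip (l₁ := ps) (l₂ := l) (le_of_eq hlen)] at this
    exact hnd.sublist this
  have hlen2 : Z.length = (Z.map Prod.fst).length := by simp
  rw [hlen2]
  have hcard : (Z.map Prod.fst).length = (Z.map Prod.fst).toFinset.card :=
    (List.toFinset_card_of_nodup hndZ).symm
  rw [hcard]
  have hsubset : (Z.map Prod.fst).toFinset ⊆ Finset.Icc s m := by
    intro x hx
    rw [List.mem_toFinset, List.mem_map] at hx
    obtain ⟨pa, hpa, rfl⟩ := hx
    rw [hZ, List.mem_filter] at hpa
    obtain ⟨hpa1, hpa2⟩ := hpa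
    have hmm := hmem pa.1 (List.of_mem_zip hpa1).1
    have hdisp := (hzip pa hpa1).1
    simp only [decide_eq_true_eq] at hpa2
    rw [Finset.mem_Icc]
    omega
  calc (Z.map Prod.fst).toFinset.card ≤ (Finset.Icc s m).card :=
        Finset.card_le_card hsubset
    _ = m + 1 - s := Nat.card_Icc s m

/-- lower bound direction: if spot `s-1` is free at the end, every car parked
at a spot `≥ s` had preference `≥ s`. -/
lemma count_ge {m : ℕ} {l ps : List ℕ} (h : park m l ∅ = some ps) {s : ℕ}
    (hnotocc : s - 1 ∉ ps.toFinset) (hs : 1 ≤ s) :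
    ps.countP (fun p => decide (s ≤ p)) ≤ l.countP (fun x => decide (s ≤ x)) := by
  obtain ⟨hlen, hnd, hmem, hzip⟩ := park_spec h
  rw [← countP_zip_fst (fun p => decide (s ≤ p)) ps l hlen,
    ← countP_zip_snd (fun x => decide (s ≤ x)) ps l hlen]
  apply List.countP_mono_left
  intro pa hpa hf
  simp only [decide_eq_true_eq] at hf ⊢
  by_contra hc
  push_neg at hc
  obtain ⟨h1, h2⟩ := hzip pa hpa
  have := h2 (s - 1) (by omega) (by omega)
  simp only [Finset.empty_union] at this
  exact hnotocc this

end Pk13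

/-- marginal displacement via contiguous occupied blocks: if after
the cars in `S` park, the preferred spot `a_i` is unoccupied, then
`c_α(S ∪ {i}) = c_α(S)`; if `a_i` lies in a maximal contiguous block of
occupied spots ending at spot `t` (so all spots `a_i, …, t` are occupied and
spot `t+1` is not), then `c_α(S ∪ {i}) − c_α(S) = t − a_i + 1`. -/
theorem stmt13 (n : ℕ) (α : Fin n → ℕ) (h : IsPF n n (List.ofFn α))
    (i : Fin n) (S : Finset (Fin n)) (hiS : i ∉ S) :
    (α i ∉ occSet n ((S.sort (· ≤ ·)).map α) →
      gameCost n α (insert i S) = gameCost n α S) ∧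
    (∀ t : ℕ, α i ≤ t →
      (∀ j, α i ≤ j → j ≤ t → j ∈ occSet n ((S.sort (· ≤ ·)).map α)) →
      t + 1 ∉ occSet n ((S.sort (· ≤ ·)).map α) →
      gameCost n α (insert i S) = gameCost n α S + (t - α i + 1)) := by
  classical
  open Pk13 in
  obtain ⟨hlen_ofFn, hbound, hfull⟩ := h
  set L : List ℕ := (S.sort (· ≤ ·)).map α with hLdef
  set a : ℕ := α i with hadef
  have hai_mem : a ∈ List.ofFn α := by rw [List.mem_ofFn]; exact ⟨i, rfl⟩
  obtain ⟨ha1, han⟩ := hbound _ hai_mem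
  -- the sorted list of `insert i S` is a permutation of `i :: sort S`
  have hperm0 : ((insert i S).sort (· ≤ ·)).Perm (i :: S.sort (· ≤ ·)) := by
    rw [← Multiset.coe_eq_coe, ← Multiset.cons_coe, Finset.sort_eq, Finset.sort_eq,
      Finset.insert_val_of_notMem hiS]
  have hperm : (((insert i S).sort (· ≤ ·)).map α).Perm (L ++ [a]) := by
    refine (hperm0.map α).trans ?_
    rw [List.map_cons, ← hLdef, ← hadef]
    exact (List.perm_append_singleton a L).symm
  have hG : gameCost n α (insert i S) = disp n (L ++ [a]) := by
    show disp n (((insert i S).sort (· ≤ ·)).map α) = _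
    exact (disp_occSet_of_perm hperm).1
  have hGS : gameCost n α S = disp n L := rfl
  -- the coalition's cars all park successfully
  have hnodup : (i :: S.sort (· ≤ ·)).Nodup := by
    rw [List.nodup_cons]
    exact ⟨fun hc => hiS ((Finset.mem_sort _).1 hc), Finset.sort_nodup _ _⟩
  have hsubperm : (i :: S.sort (· ≤ ·)).Subperm (List.finRange n) :=
    hnodup.subperm (fun x _ => List.mem_finRange x)
  have hLsome : (park n L ∅).isSome := by
    obtain ⟨l', hl'perm, hl'sub⟩ :=
      ((List.sublist_cons_self i (S.sort (· ≤ ·))).subperm.trans hsubperm)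
    have h1 : (park n (l'.map α) ∅).isSome := by
      refine park_sublist_isSome ?_ (subset_refl ∅) hfull
      rw [List.ofFn_eq_map]
      exact hl'sub.map α
    rwa [(disp_occSet_of_perm (hl'perm.map α)).2.2] at h1
  obtain ⟨ps, hps⟩ := Option.isSome_iff_exists.1 hLsome
  obtain ⟨hlenps, hndps, hmemps, hzipps⟩ := park_spec hps
  have hOcc : occSet n L = ps.toFinset := by unfold occSet; rw [hps]
  -- computing the displacement when the extra car parks at spot p
  have hlast : ∀ p, ff n a ps.toFinset = some p →
      disp n (L ++ [a]) = disp n L + (p - a) := by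
    intro p hp
    have hpk : park n (L ++ [a]) ∅ = some (ps ++ [p]) := by
      rw [park_append, hps]
      simp only [Option.bind_some, Finset.empty_union]
      rw [park_cons, hp]
      simp [park]
    unfold disp
    rw [hpk, hps]
    show (((ps ++ [p]).zip (L ++ [a])).map fun x => x.1 - x.2).sum =
      ((ps.zip L).map fun x => x.1 - x.2).sum + (p - a)
    rw [List.zip_append hlenps]
    simp
  constructor
  · -- part 1 : preferred spot free
    intro hnot
    rw [hOcc] at hnot
    have hp : ff n a ps.toFinset = some a :=
      ff_eq_some.2 ⟨le_rfl, han, hnot, fun j h1 h2 => absurd h2 (by omega)⟩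
    rw [hG, hlast a hp, hGS]
    simp
  · -- part 2 : preferred spot inside an occupied block ending at t
    intro t hat hblock hfree
    rw [hOcc] at hblock hfree
    by_cases htn : t + 1 ≤ n
    · have hp : ff n a ps.toFinset = some (t + 1) :=
        ff_eq_some.2 ⟨by omega, htn, hfree, fun j hj1 hj2 => hblock j hj1 (by omega)⟩
      rw [hG, hlast _ hp, hGS]
      congr 1
      omega
    · -- impossible: spots a..n all full contradicts the parking function property
      exfalso
      push_neg at htn
      have hPa : ∀ j, a ≤ j → j ≤ n → j ∈ ps.toFinset :=
        fun j h1 h2 => hblock j h1 (by omega)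
      have hex : ∃ s, ∀ j, s ≤ j → j ≤ n → j ∈ ps.toFinset := ⟨a, hPa⟩
      set s₀ := Nat.find hex with hs₀def
      have hs₀le : s₀ ≤ a := Nat.find_le hPa
      have hP₀ : ∀ j, s₀ ≤ j → j ≤ n → j ∈ ps.toFinset := Nat.find_spec hex
      have hspot1 : ∀ p ∈ ps, 1 ≤ p := by
        intro p hp
        obtain ⟨pa, hpa, rfl⟩ := pairs_cover (le_of_eq hlenps) hp
        have h1 := (hzipps pa hpa).1
        have h2 : pa.2 ∈ L := (List.of_mem_zip hpa).2
        have h3 : 1 ≤ pa.2 := by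
          rw [hLdef, List.mem_map] at h2
          obtain ⟨j, _, hj⟩ := h2
          rw [← hj]
          exact (hbound _ (by rw [List.mem_ofFn]; exact ⟨j, rfl⟩)).1
        omega
      have hs₀1 : 1 ≤ s₀ := by
        by_contra hc
        push_neg at hc
        interval_cases s₀
        have h0 : (0 : ℕ) ∈ ps.toFinset := hP₀ 0 le_rfl (by omega)
        rw [List.mem_toFinset] at h0
        exact absurd (hspot1 0 h0) (by omega)
      have hnotocc : s₀ - 1 ∉ ps.toFinset := by
        rcases Nat.eq_or_lt_of_le hs₀1 with h1 | h1
        · intro hc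
          rw [← h1] at hc
          simp only [List.mem_toFinset] at hc
          exact absurd (hspot1 _ hc) (by omega)
        · have hnP := Nat.find_min hex (show s₀ - 1 < s₀ by omega)
          push_neg at hnP
          obtain ⟨j, hj1, hj2, hj3⟩ := hnP
          intro hc
          rcases Nat.lt_or_ge j s₀ with hj | hj
          · have : j = s₀ - 1 := by omega
            subst this
            exact hj3 hc
          · exact hj3 (hP₀ j hj hj2)
      -- counting
      obtain ⟨fps, hfps⟩ := Option.isSome_iff_exists.1 hfull
      have hub : (List.ofFn α).countP (fun x => decide (s₀ ≤ x)) ≤ n + 1 - s₀ :=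
        count_le hfps s₀
      have hge1 : ps.countP (fun p => decide (s₀ ≤ p)) ≤
          L.countP (fun x => decide (s₀ ≤ x)) := count_ge hps hnotocc hs₀1
      have hge2 : n + 1 - s₀ ≤ ps.countP (fun p => decide (s₀ ≤ p)) := by
        calc n + 1 - s₀ = (Finset.Icc s₀ n).card := (Nat.card_Icc _ _).symm
          _ ≤ ((ps.toFinset).filter (fun p => decide (s₀ ≤ p) = true)).card := by
              refine Finset.card_le_card ?_
              intro x hx
              rw [Finset.mem_Icc] at hx
              rw [Finset.mem_filter]
              exact ⟨hP₀ x hx.1 hx.2, by simpa using hx.1⟩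
          _ = ((ps.filter (fun p => decide (s₀ ≤ p))).toFinset).card := by
              rw [List.toFinset_filter]
          _ = (ps.filter (fun p => decide (s₀ ≤ p))).length :=
              List.toFinset_card_of_nodup (hndps.filter _)
          _ = ps.countP (fun p => decide (s₀ ≤ p)) :=
              (List.countP_eq_length_filter).symm
      have hcnt : (i :: S.sort (· ≤ ·)).countP (fun j => decide (s₀ ≤ α j)) ≤
          (List.finRange n).countP (fun j => decide (s₀ ≤ α j)) :=
        hsubperm.countP_le _
      have hofn : (List.ofFn α).countP (fun x => decide (s₀ ≤ x)) =
          (List.finRange n).countP (fun j => decide (s₀ ≤ α j)) := by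
        rw [List.ofFn_eq_map, List.countP_map]
        rfl
      have hLcnt : L.countP (fun x => decide (s₀ ≤ x)) =
          (S.sort (· ≤ ·)).countP (fun j => decide (s₀ ≤ α j)) := by
        rw [hLdef, List.countP_map]
        rfl
      have hcons : (i :: S.sort (· ≤ ·)).countP (fun j => decide (s₀ ≤ α j)) =
          (S.sort (· ≤ ·)).countP (fun j => decide (s₀ ≤ α j)) + 1 := by
        rw [List.countP_cons]
        have : decide (s₀ ≤ α i) = true := by
          rw [← hadef]
          simpa using (by omega : s₀ ≤ a)
        rw [this]
        simp
      omega
end
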